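/- Let p, q ∈ R^d be probability vectors with p majorized by q, and let {ψ_i}, {φ_j} be elements of a convex set C such that for every permutation π there exists an affine map U_π : C → C with U_π(φ_j) = ψ_{π(j)} for all j. Then Σ_i p_i ψ_i = Σ_k λ_k U_{π_k}(Σ_j q_j φ_j) for some probability distribution {λ_k} and permutations π_k; i.e., Σ_i p_i ψ_i is a convex mixture of affine images of Σ_j q_j φ_j. -/

import Mathlib

open Finset

def MajorizedBy {d : ℕ} (x y : Fin d → ℝ) : Prop :=
  ∃ σ τ : Equiv.Perm (Fin d), Antitone (x ∘ σ) ∧ Antitone (y ∘ τ) ∧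
    (∀ k : ℕ, k < d →
      ∑ i ∈ Finset.univ.filter (fun i : Fin d => (i : ℕ) < k), x (σ i) ≤
      ∑ i ∈ Finset.univ.filter (fun i : Fin d => (i : ℕ) < k), y (τ i)) ∧
    ∑ i, x i = ∑ i, y i


lemma abel_nonneg (d : ℕ) (a z : ℕ → ℝ)
    (ha : ∀ i, i + 1 < d → a (i + 1) ≤ a i)
    (hZ : ∀ k, k ≤ d → 0 ≤ ∑ i ∈ Finset.range k, z i)
    (hZd : ∑ i ∈ Finset.range d, z i = 0) :
    0 ≤ ∑ i ∈ Finset.range d, a i * z i := by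
  have h := Finset.sum_range_by_parts a z d
  simp only [smul_eq_mul] at h
  rw [hZd, mul_zero, zero_sub] at h
  rw [h, neg_nonneg]
  apply Finset.sum_nonpos
  intro i hi
  rw [Finset.mem_range] at hi
  have h1 : i + 1 < d := by omega
  apply mul_nonpos_of_nonpos_of_nonneg
  · linarith [ha i h1]
  · exact hZ (i + 1) (by omega)

lemma lift_sum {d k : ℕ} (hk : k ≤ d) (x : Fin d → ℝ) :
    ∑ i ∈ Finset.range k, (fun n => if h : n < d then x ⟨n, h⟩ else 0) i =
      ∑ i ∈ Finset.univ.filter (fun i : Fin d => (i : ℕ) < k), x i := by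
  rw [Finset.sum_filter]
  have h1 : ∑ i : Fin d, (if (i : ℕ) < k then x i else 0) =
      ∑ i : Fin d, (fun n => if n < k then (if h : n < d then x ⟨n, h⟩ else 0) else 0) (i : ℕ) := by
    apply Finset.sum_congr rfl
    intro i _
    simp [i.isLt]
  rw [h1, Fin.sum_univ_eq_sum_range (fun n => if n < k then (if h : n < d then x ⟨n, h⟩ else 0) else 0) d, ← Finset.sum_filter]
  apply Finset.sum_congr
  · ext n; simp only [Finset.mem_filter, Finset.mem_range]; omega
  · intros; rfl

lemma key_ineq {d : ℕ} (p q : Fin d → ℝ) (hmaj : MajorizedBy p q) (c : Fin d → ℝ) :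
    ∃ π : Equiv.Perm (Fin d), ∑ i, c i * p i ≤ ∑ i, c i * q (π i) := by
  obtain ⟨σ, τ, hps, hqs, hpart, htot⟩ := hmaj
  set ρ : Equiv.Perm (Fin d) := Tuple.sort (fun i => -(c i)) with hρ
  have hcρ : Antitone (c ∘ ρ) := by
    intro i j hij
    have := Tuple.monotone_sort (fun i => -(c i)) hij
    simpa using this
  refine ⟨ρ.symm.trans τ, ?_⟩
  -- Step A: reindex LHS by ρ
  have hA : ∑ i, c i * p i = ∑ i, (c ∘ ρ) i * (p ∘ σ) ((ρ.trans σ.symm) i) := by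
    rw [← Equiv.sum_comp ρ (fun i => c i * p i)]
    apply Finset.sum_congr rfl; intro i _; simp
  -- Step B: rearrangement
  have hmono : Monovary (c ∘ ρ) (p ∘ σ) := by
    intro i j hgij
    rcases le_or_gt i j with h | h
    · exact absurd (hps h) (not_le_of_gt hgij)
    · exact hcρ h.le
  have hB : ∑ i, (c ∘ ρ) i * (p ∘ σ) ((ρ.trans σ.symm) i) ≤ ∑ i, (c ∘ ρ) i * (p ∘ σ) i := by
    simpa [smul_eq_mul] using hmono.sum_smul_comp_perm_le_sum_smul (σ := ρ.trans σ.symm)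
  -- Step C: Abel
  set cn : ℕ → ℝ := fun n => if h : n < d then (c ∘ ρ) ⟨n, h⟩ else 0 with hcn
  set zn : ℕ → ℝ := fun n => if h : n < d then (q ∘ τ) ⟨n, h⟩ - (p ∘ σ) ⟨n, h⟩ else 0 with hzn
  have hzsplit : ∀ k, k ≤ d → ∑ i ∈ Finset.range k, zn i =
      (∑ i ∈ Finset.univ.filter (fun i : Fin d => (i : ℕ) < k), q (τ i)) -
      (∑ i ∈ Finset.univ.filter (fun i : Fin d => (i : ℕ) < k), p (σ i)) := by
    intro k hk
    rw [← lift_sum hk (fun i => q (τ i)), ← lift_sum hk (fun i => p (σ i)), ← Finset.sum_sub_distrib]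
    apply Finset.sum_congr rfl
    intro n hn
    rw [Finset.mem_range] at hn
    simp only [zn, hzn]
    rw [dif_pos (lt_of_lt_of_le hn hk), dif_pos (lt_of_lt_of_le hn hk), dif_pos (lt_of_lt_of_le hn hk)]
    rfl
  have hfull : ∀ x : Fin d → ℝ,
      ∑ i ∈ Finset.univ.filter (fun i : Fin d => (i : ℕ) < d), x i = ∑ i, x i := by
    intro x
    apply Finset.sum_congr _ (fun _ _ => rfl)
    simp [Finset.filter_eq_self, Fin.is_lt]
  have hZd : ∑ i ∈ Finset.range d, zn i = 0 := by
    rw [hzsplit d le_rfl, hfull, hfull, Equiv.sum_comp τ q, Equiv.sum_comp σ p, ← htot, sub_self]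
  have hZ : ∀ k, k ≤ d → 0 ≤ ∑ i ∈ Finset.range k, zn i := by
    intro k hk
    rcases eq_or_lt_of_le hk with rfl | hk'
    · rw [hZd]
    · rw [hzsplit k hk, sub_nonneg]; exact hpart k hk'
  have ha : ∀ i, i + 1 < d → cn (i + 1) ≤ cn i := by
    intro i hi
    simp only [cn]
    rw [dif_pos hi, dif_pos (by omega : i < d)]
    exact hcρ (Fin.mk_le_mk.mpr (Nat.le_succ i))
  have habel := abel_nonneg d cn zn ha hZ hZd
  have hC : ∑ i, (c ∘ ρ) i * (p ∘ σ) i ≤ ∑ i, (c ∘ ρ) i * (q ∘ τ) i := by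
    have hconv : ∑ i ∈ Finset.range d, cn i * zn i =
        ∑ i : Fin d, ((c ∘ ρ) i * (q ∘ τ) i - (c ∘ ρ) i * (p ∘ σ) i) := by
      have hstep : ∑ i : Fin d, ((c ∘ ρ) i * (q ∘ τ) i - (c ∘ ρ) i * (p ∘ σ) i) =
          ∑ i : Fin d, (fun n => if h : n < d then
            ((c ∘ ρ) ⟨n, h⟩ * (q ∘ τ) ⟨n, h⟩ - (c ∘ ρ) ⟨n, h⟩ * (p ∘ σ) ⟨n, h⟩) else 0)
            (i : ℕ) := by
        apply Finset.sum_congr rfl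
        intro i _
        simp [i.isLt]
      rw [hstep, Fin.sum_univ_eq_sum_range (fun n => if h : n < d then
        ((c ∘ ρ) ⟨n, h⟩ * (q ∘ τ) ⟨n, h⟩ - (c ∘ ρ) ⟨n, h⟩ * (p ∘ σ) ⟨n, h⟩) else 0) d]
      apply Finset.sum_congr rfl
      intro n hn
      rw [Finset.mem_range] at hn
      simp only [cn, zn]
      rw [dif_pos hn, dif_pos hn, dif_pos hn]
      ring
    rw [hconv, Finset.sum_sub_distrib, sub_nonneg] at habel
    exact habel
  -- Step D: reindex RHS
  have hD : ∑ i, (c ∘ ρ) i * (q ∘ τ) i = ∑ i, c i * q ((ρ.symm.trans τ) i) := by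
    rw [← Equiv.sum_comp ρ (fun i => c i * q ((ρ.symm.trans τ) i))]
    apply Finset.sum_congr rfl; intro i _; simp
  rw [hA, ← hD]
  exact le_trans hB hC

lemma hull_mem {d : ℕ} (p q : Fin d → ℝ)
    (hkey : ∀ c : Fin d → ℝ, ∃ π : Equiv.Perm (Fin d), ∑ i, c i * p i ≤ ∑ i, c i * q (π i)) :
    ∃ lam : Equiv.Perm (Fin d) → ℝ, (∀ π, 0 ≤ lam π) ∧ ∑ π, lam π = 1 ∧
      p = ∑ π, lam π • (q ∘ π) := by
  set S : Set (Fin d → ℝ) := Set.range (fun π : Equiv.Perm (Fin d) => q ∘ π) with hS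
  have hmem : p ∈ convexHull ℝ S := by
    by_contra hcon
    obtain ⟨f, u, hfu, hup⟩ := geometric_hahn_banach_closed_point
      (convex_convexHull ℝ S) ((Set.finite_range _).isCompact_convexHull (𝕜 := ℝ)).isClosed hcon
    set c : Fin d → ℝ := fun i => f (fun j => if i = j then (1 : ℝ) else 0) with hc
    have hfx : ∀ x : Fin d → ℝ, f x = ∑ i, c i * x i := by
      intro x
      conv_lhs => rw [pi_eq_sum_univ x]
      rw [map_sum]
      apply Finset.sum_congr rfl
      intro i _
      rw [map_smul, smul_eq_mul, mul_comm]
    obtain ⟨π, hπ⟩ := hkey c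
    have h1 : f (q ∘ π) < u := hfu _ (subset_convexHull ℝ S ⟨π, rfl⟩)
    rw [hfx] at h1 hup
    have : ∑ i, c i * q (π i) < ∑ i, c i * p i := lt_trans h1 hup
    exact absurd hπ (not_le_of_gt this)
  rw [_root_.convexHull_eq] at hmem
  obtain ⟨ι, t, w, z, hw0, hw1, hz, hx⟩ := hmem
  rw [Finset.centerMass_eq_of_sum_1 _ _ hw1] at hx
  classical
  set ch : ι → Equiv.Perm (Fin d) := fun i =>
    if h : ∃ π : Equiv.Perm (Fin d), q ∘ π = z i then h.choose else 1 with hch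
  have hchz : ∀ i ∈ t, q ∘ (ch i) = z i := by
    intro i hi
    obtain ⟨π, hπ⟩ := hz i hi
    have hex : ∃ π : Equiv.Perm (Fin d), q ∘ π = z i := ⟨π, hπ⟩
    simp only [ch, dif_pos hex]
    exact hex.choose_spec
  refine ⟨fun π => ∑ i ∈ t.filter (fun i => ch i = π), w i, ?_, ?_, ?_⟩
  · intro π
    exact Finset.sum_nonneg fun i hi => hw0 i (Finset.mem_filter.mp hi).1
  · rw [← hw1]
    exact Finset.sum_fiberwise t ch w
  · rw [← hx]
    have : ∀ π : Equiv.Perm (Fin d),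
        (∑ i ∈ t.filter (fun i => ch i = π), w i) • (q ∘ π) =
        ∑ i ∈ t.filter (fun i => ch i = π), w i • z i := by
      intro π
      rw [Finset.sum_smul]
      apply Finset.sum_congr rfl
      intro i hi
      obtain ⟨hit, hiπ⟩ := Finset.mem_filter.mp hi
      rw [← hiπ, hchz i hit]
    rw [funext this]
    exact (Finset.sum_fiberwise t ch (fun i => w i • z i)).symm

theorem stmt_13 {V : Type*} [AddCommGroup V] [Module ℝ V] {d : ℕ}
    (p q : Fin d → ℝ)
    (hp0 : ∀ i, 0 ≤ p i) (hp1 : ∑ i, p i = 1)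
    (hq0 : ∀ i, 0 ≤ q i) (hq1 : ∑ i, q i = 1)
    (hmaj : MajorizedBy p q)
    (ψ φ : Fin d → V)
    (U : Equiv.Perm (Fin d) → (V →ᵃ[ℝ] V))
    (hU : ∀ (π : Equiv.Perm (Fin d)) (j : Fin d), U π (φ j) = ψ (π j)) :
    ∃ (n : ℕ) (lam : Fin n → ℝ) (πs : Fin n → Equiv.Perm (Fin d)),
      (∀ k, 0 ≤ lam k) ∧ ∑ k, lam k = 1 ∧
      ∑ i, p i • ψ i = ∑ k, lam k • (U (πs k)) (∑ j, q j • φ j) := by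
  obtain ⟨lam', hl0, hl1, hpl⟩ := hull_mem p q (key_ineq p q hmaj)
  -- affine maps on affine combinations
  have haff : ∀ (f : V →ᵃ[ℝ] V) (x : V), f x = f.linear x + f 0 := by
    intro f x
    have h := f.map_vadd 0 x
    simpa [vadd_eq_add] using h
  have hUval : ∀ π : Equiv.Perm (Fin d), U π (∑ j, q j • φ j) = ∑ j, q j • ψ (π j) := by
    intro π
    rw [haff (U π), map_sum]
    have h1 : ∑ j, (U π).linear (q j • φ j) + (U π) 0
        = ∑ j, (q j • (U π).linear (φ j) + q j • (U π) 0) := by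
      rw [Finset.sum_add_distrib, ← Finset.sum_smul, hq1, one_smul]
      congr 1
      exact Finset.sum_congr rfl fun j _ => by rw [map_smul]
    rw [h1]
    apply Finset.sum_congr rfl
    intro j _
    rw [← smul_add, ← haff (U π) (φ j), hU]
  set n := Fintype.card (Equiv.Perm (Fin d)) with hn
  set e : Fin n ≃ Equiv.Perm (Fin d) := (Fintype.equivFin (Equiv.Perm (Fin d))).symm with he
  refine ⟨n, fun k => lam' (e k), fun k => (e k)⁻¹, fun k => hl0 _, ?_, ?_⟩
  · rw [Equiv.sum_comp e lam', hl1]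
  · have hrhs : ∀ k : Fin n, lam' (e k) • (U ((e k)⁻¹)) (∑ j, q j • φ j)
        = lam' (e k) • ∑ i, q ((e k) i) • ψ i := by
      intro k
      rw [hUval]
      congr 1
      rw [← Equiv.sum_comp (e k) (fun j => q j • ψ ((e k)⁻¹ j))]
      apply Finset.sum_congr rfl
      intro i _
      simp
    rw [funext hrhs]
    have hswap : ∑ k : Fin n, lam' (e k) • ∑ i, q ((e k) i) • ψ i
        = ∑ π : Equiv.Perm (Fin d), lam' π • ∑ i, q (π i) • ψ i :=
      Equiv.sum_comp e (fun π => lam' π • ∑ i, q (π i) • ψ i)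
    rw [hswap]
    have : ∀ π : Equiv.Perm (Fin d), lam' π • ∑ i, q (π i) • ψ i
        = ∑ i, (lam' π * q (π i)) • ψ i := by
      intro π
      rw [Finset.smul_sum]
      exact Finset.sum_congr rfl fun i _ => by rw [smul_smul]
    rw [funext this, Finset.sum_comm]
    apply Finset.sum_congr rfl
    intro i _
    rw [← Finset.sum_smul]
    congr 1
    have := congrFun hpl i
    simp only [Finset.sum_apply, Pi.smul_apply, Function.comp_apply, smul_eq_mul] at this
    exact this
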